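/- If X ∈ ℝ² satisfies T_P(T_{P'}(X)) = X (X is the fixed point of 𝒮₁ = T_P∘T_{P'}), then the point X' := η(X) satisfies T_{P'}(T_P(X')) = X' (it is a fixed point of 𝒮₂ = T_{P'}∘T_P), and X' − X is a scalar multiple of P' − P. (Thus the line joining the P-ceva conjugate of Q and the P'-ceva conjugate of Q' is parallel to PP'.) -/

import Mathlib

noncomputable section

abbrev Pt := EuclideanSpace ℝ (Fin 2)

lemma aff3 (T : Pt →ᵃ[ℝ] Pt) (A B C : Pt) (a b c : ℝ) (h : a + b + c = 1) :
    T (a • A + b • B + c • C) = a • T A + b • T B + c • T C := by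
  have ha : a = 1 - b - c := by linarith
  subst ha
  have hv : (1 - b - c) • A + b • B + c • C = (b • (B -ᵥ A) + c • (C -ᵥ A)) +ᵥ A := by
    simp only [vsub_eq_sub, vadd_eq_add]
    module
  rw [hv, AffineMap.map_vadd, map_add, map_smul, map_smul,
      AffineMap.linearMap_vsub, AffineMap.linearMap_vsub]
  simp only [vsub_eq_sub, vadd_eq_add]
  module

lemma coords_unique {A B C : Pt} (h : AffineIndependent ℝ ![A, B, C])
    {a b c a' b' c' : ℝ} (hsum : a + b + c = a' + b' + c')
    (heq : a • A + b • B + c • C = a' • A + b' • B + c' • C) :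
    a = a' ∧ b = b' ∧ c = c' := by
  have key := h.eq_of_sum_eq_sum (s := Finset.univ) (w₁ := ![a, b, c]) (w₂ := ![a', b', c'])
    (by simpa [Fin.sum_univ_three] using hsum)
    (by simpa [Fin.sum_univ_three] using heq)
  exact ⟨key 0 (Finset.mem_univ _), key 1 (Finset.mem_univ _), key 2 (Finset.mem_univ _)⟩

lemma coords_exist {A B C : Pt} (h : AffineIndependent ℝ ![A, B, C]) (X : Pt) :
    ∃ a b c : ℝ, a + b + c = 1 ∧ X = a • A + b • B + c • C := by
  have htop : affineSpan ℝ (Set.range ![A, B, C]) = ⊤ := by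
    rw [h.affineSpan_eq_top_iff_card_eq_finrank_add_one]
    simp [finrank_euclideanSpace]
  have hX : X ∈ affineSpan ℝ (Set.range ![A, B, C]) := htop ▸ AffineSubspace.mem_top _ _ _
  obtain ⟨w, hw1, hw⟩ := eq_affineCombination_of_mem_affineSpan_of_fintype hX
  refine ⟨w 0, w 1, w 2, by simpa [Fin.sum_univ_three] using hw1, ?_⟩
  rw [hw, Finset.univ.affineCombination_eq_linear_combination _ _ hw1]
  simp [Fin.sum_univ_three]

set_option maxHeartbeats 4000000 in
theorem stmt7
    (A B C : Pt) (hABC : AffineIndependent ℝ ![A, B, C])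
    (α β γ : ℝ) (hsum : α + β + γ = 1)
    (hα : α ≠ 0) (hβ : β ≠ 0) (hγ : γ ≠ 0)
    (hβγ : β + γ ≠ 0) (hγα : γ + α ≠ 0) (hαβ : α + β ≠ 0)
    (hab : α ≠ β) (hbc : β ≠ γ) (hca : γ ≠ α)
    (hs : α * β + β * γ + γ * α ≠ 0)
    (G : Pt) (hG : G = (3:ℝ)⁻¹ • (A + B + C))
    (P : Pt) (hP : P = α • A + β • B + γ • C)
    (P' : Pt)
    (hP'' : P' = (α * β + β * γ + γ * α)⁻¹ • ((β * γ) • A + (γ * α) • B + (α * β) • C))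
    (Q : Pt) (hQ : Q = G - (2:ℝ)⁻¹ • (P' - G))
    (D E F : Pt)
    (hD : D = (β + γ)⁻¹ • (β • B + γ • C))
    (hE : E = (γ + α)⁻¹ • (α • A + γ • C))
    (hF : F = (α + β)⁻¹ • (α • A + β • B))
    (D₃ E₃ F₃ : Pt)
    (hD₃ : D₃ = (β + γ)⁻¹ • (γ • B + β • C))
    (hE₃ : E₃ = (γ + α)⁻¹ • (γ • A + α • C))
    (hF₃ : F₃ = (α + β)⁻¹ • (β • A + α • B))
    (TP : Pt →ᵃ[ℝ] Pt) (hTPA : TP A = D) (hTPB : TP B = E) (hTPC : TP C = F)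
    (TP' : Pt →ᵃ[ℝ] Pt) (hTP'A : TP' A = D₃) (hTP'B : TP' B = E₃) (hTP'C : TP' C = F₃)
    (V : Pt) (hV : V = (2:ℝ) • Q - P)
    (η : Pt →ᵃ[ℝ] Pt) (hηG : η G = G) (hηV : η V = V) (hηP : η P = P')

    (X : Pt) (hX : TP (TP' X) = X) :
    TP' (TP (η X)) = η X ∧ ∃ k : ℝ, η X - X = k • (P' - P) := by
  obtain ⟨x, y, z, hxyz, hXc⟩ := coords_exist hABC X
  have hγ' : γ = 1 - α - β := by linarith
  subst hγ'
  have hz' : z = 1 - x - y := by linarith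
  subst hz'
  -- nonzero facts
  have hA1 : (1:ℝ) - α ≠ 0 := fun h => hβγ (by linarith)
  have hB1 : (1:ℝ) - β ≠ 0 := fun h => hγα (by linarith)
  have hC1 : (1:ℝ) - α - β ≠ 0 := hγ
  have hS0 : α + β - α^2 - α*β - β^2 ≠ 0 := fun h => hs (by linear_combination h)
  -- step 1 : TP' X as a combination of A, B, C
  have h1 : TP' X = (y*(1-α-β)/(1-β) + (1-x-y)*β/(α+β)) • A
      + (x*(1-α-β)/(1-α) + (1-x-y)*α/(α+β)) • B
      + (x*β/(1-α) + y*α/(1-β)) • C := by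
    rw [hXc, aff3 TP' A B C x y (1-x-y) (by ring), hTP'A, hTP'B, hTP'C, hD₃, hE₃, hF₃]
    match_scalars <;> field_simp <;> ring
  have hsw : (y*(1-α-β)/(1-β) + (1-x-y)*β/(α+β))
      + (x*(1-α-β)/(1-α) + (1-x-y)*α/(α+β))
      + (x*β/(1-α) + y*α/(1-β)) = 1 := by
    field_simp
    ring
  -- step 2 : TP (TP' X) as a combination of A, B, C
  have h2 : TP (TP' X) = ((α^2*(1-α) + 2*α*β*(1-α-β)*x)/((α+β)*(1-α)*(1-β))) • A
      + ((β^2*(1-β) + 2*α*β*(1-α-β)*y)/((α+β)*(1-α)*(1-β))) • B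
      + (1 - (α^2*(1-α) + 2*α*β*(1-α-β)*x)/((α+β)*(1-α)*(1-β))
           - (β^2*(1-β) + 2*α*β*(1-α-β)*y)/((α+β)*(1-α)*(1-β))) • C := by
    rw [h1, aff3 TP A B C _ _ _ hsw, hTPA, hTPB, hTPC, hD, hE, hF]
    match_scalars <;> field_simp <;> ring
  rw [hX, hXc] at h2
  obtain ⟨hEx, hEy, -⟩ := coords_unique hABC (by ring) h2
  -- step 3 : solve the fixed point equations
  have e1 : (3*α^2*β - α^2 + 3*α*β^2 - 4*α*β + α - β^2 + β) * x = α^2*(1-α) := by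
    field_simp at hEx
    linear_combination hEx
  have e2 : (3*α^2*β - α^2 + 3*α*β^2 - 4*α*β + α - β^2 + β) * y = β^2*(1-β) := by
    field_simp at hEy
    linear_combination hEy
  have hN : (3*α^2*β - α^2 + 3*α*β^2 - 4*α*β + α - β^2 + β) ≠ 0 := by
    intro h0
    have : α^2*(1-α) = 0 := by rw [← e1, h0]; ring
    exact (mul_ne_zero (pow_ne_zero 2 hα) hA1) this
  set N : ℝ := 3*α^2*β - α^2 + 3*α*β^2 - 4*α*β + α - β^2 + β with hNdef
  have hx : x = α^2*(1-α)/N := by field_simp; linear_combination e1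
  have hy : y = β^2*(1-β)/N := by field_simp; linear_combination e2
  -- step 4 : X in the affine basis G, V, P
  have hgp : (-3*α*β*(1-α-β)/N) + 0 + ((α + β - α^2 - α*β - β^2)/N) = 1 := by
    field_simp
    ring
  have hcomb : X = (-3*α*β*(1-α-β)/N) • G + (0:ℝ) • V
      + ((α + β - α^2 - α*β - β^2)/N) • P := by
    rw [hXc, hx, hy, hG, hP]
    match_scalars <;> field_simp <;> ring
  have hηX : η X = (-3*α*β*(1-α-β)/N) • G + (0:ℝ) • V
      + ((α + β - α^2 - α*β - β^2)/N) • P' := by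
    rw [hcomb, aff3 η G V P _ _ _ hgp, hηG, hηV, hηP]
  -- step 5 : η X as a combination of A, B, C
  have hηc : η X = (β*(1-α-β)*(1-α)/N) • A + (α*(1-β)*(1-α-β)/N) • B
      + (α*β*(α+β)/N) • C := by
    rw [hηX, hG, hP'']
    have hS1 : α * β + β * (1 - α - β) + (1 - α - β) * α = α + β - α^2 - α*β - β^2 := by ring
    rw [hS1]
    match_scalars <;> field_simp <;> ring
  have hxpsum : (β*(1-α-β)*(1-α)/N) + (α*(1-β)*(1-α-β)/N) + (α*β*(α+β)/N) = 1 := by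
    field_simp
    ring
  -- step 6 : TP (η X)
  have h3 : TP (η X) = (α^2*(1-α)/N) • A + (β^2*(1-β)/N) • B
      + ((1-α-β)^2*(α+β)/N) • C := by
    rw [hηc, aff3 TP A B C _ _ _ hxpsum, hTPA, hTPB, hTPC, hD, hE, hF]
    match_scalars <;> field_simp <;> ring
  have hx0sum : (α^2*(1-α)/N) + (β^2*(1-β)/N) + ((1-α-β)^2*(α+β)/N) = 1 := by
    field_simp
    ring
  -- step 7 : TP' (TP (η X)) = η X
  have h4 : TP' (TP (η X)) = (β*(1-α-β)*(1-α)/N) • A + (α*(1-β)*(1-α-β)/N) • B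
      + (α*β*(α+β)/N) • C := by
    rw [h3, aff3 TP' A B C _ _ _ hx0sum, hTP'A, hTP'B, hTP'C, hD₃, hE₃, hF₃]
    match_scalars <;> field_simp <;> ring
  refine ⟨by rw [h4, ← hηc], ⟨(α + β - α^2 - α*β - β^2)/N, ?_⟩⟩
  rw [hηc, hXc, hx, hy, hP, hP'']
  have hS1 : α * β + β * (1 - α - β) + (1 - α - β) * α = α + β - α^2 - α*β - β^2 := by ring
  rw [hS1]
  have hS2 : α + β - α ^ 2 - β * α - β ^ 2 ≠ 0 := fun h => hS0 (by linear_combination h)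
  match_scalars
  · field_simp
    ring
  · field_simp
    ring
  · field_simp
    linear_combination -hNdef
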